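/- Let T ∈ ℝ^{d_1} ⊗ ... ⊗ ℝ^{d_p} be a fixed real tensor, let x_1, ..., x_p be unit vectors with x_i ∈ ℝ^{d_i}, and let φ_1, ..., φ_p be independent standard Gaussian vectors with φ_i ~ N(0, I_{d_i}). Then for every positive integer k, E[⟨T, φ_1 ⊗ ... ⊗ φ_p⟩^{2k}] ≥ ((2k-1)!!)^p · ⟨T, x_1 ⊗ ... ⊗ x_p⟩^{2k}. -/

import Mathlib

open Nat MeasureTheory ProbabilityTheory

/-- The pairing `⟨T, x 1 ⊗ ... ⊗ x p⟩ = ∑_{i₁,...,i_p} T_{i₁,...,i_p} (x 1)_{i₁} ⋯ (x p)_{i_p}`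
of a real tensor `T ∈ ℝ^{d 1} ⊗ ... ⊗ ℝ^{d p}` with vectors `x i ∈ ℝ^{d i}`. -/
noncomputable def tensorPair {p : ℕ} {d : Fin p → ℕ}
    (T : ((i : Fin p) → Fin (d i)) → ℝ) (x : (i : Fin p) → Fin (d i) → ℝ) : ℝ :=
  ∑ f : (i : Fin p) → Fin (d i), T f * ∏ i, x i (f i)

noncomputable def Mr (k : ℕ) : ℝ := ((2 * k)! : ℝ) / (2 ^ k * (k ! : ℝ))

lemma Mr_zero : Mr 0 = 1 := by simp [Mr]

lemma Mr_nonneg (k : ℕ) : 0 ≤ Mr k := by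
  unfold Mr; positivity

lemma Mr_succ (k : ℕ) : Mr (k + 1) = (2 * k + 1) * Mr k := by
  unfold Mr
  have h1 : 2 * (k + 1) = (2 * k + 1) + 1 := by ring
  have hf1 : (((2 * k + 1) + 1)! : ℝ) = ((2*k+1+1 : ℕ) : ℝ) * ((2*k+1 : ℕ) : ℝ) * ((2*k)! : ℝ) := by
    rw [Nat.factorial_succ, Nat.factorial_succ]; push_cast; ring
  have hf2 : ((k + 1)! : ℝ) = ((k+1 : ℕ) : ℝ) * (k ! : ℝ) := by
    rw [Nat.factorial_succ]; push_cast; ring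
  rw [h1, hf1, hf2]
  have h2 : ((2 * k)! : ℝ) ≠ 0 := Nat.cast_ne_zero.2 (Nat.factorial_ne_zero _)
  have h3 : ((k)! : ℝ) ≠ 0 := Nat.cast_ne_zero.2 (Nat.factorial_ne_zero _)
  have h4 : (2:ℝ) ^ k ≠ 0 := by positivity
  have h5 : ((k:ℝ)+1) ≠ 0 := by positivity
  push_cast
  field_simp
  ring

lemma pow_le_one_add_sq_pow (m : ℕ) (x : ℝ) : |x| ^ m ≤ 1 + (x ^ 2) ^ m := by
  rcases le_or_gt (|x|) 1 with h | h
  · have := pow_le_one₀ (abs_nonneg x) h (n := m)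
    nlinarith [pow_nonneg (sq_nonneg x) m]
  · have h1 : |x| ^ m ≤ (|x| ^ 2) ^ m := by
      rw [← pow_mul]
      exact pow_le_pow_right₀ h.le (by omega)
    rw [sq_abs] at h1
    nlinarith
  
lemma sq_pow_le (m : ℕ) (x : ℝ) : (x ^ 2) ^ m ≤ (m ! : ℝ) * 4 ^ m * Real.exp (x ^ 2 / 4) := by
  have h0 : (0:ℝ) ≤ x ^ 2 / 4 := by positivity
  have h1 : (x ^ 2 / 4) ^ m / (m ! : ℝ) ≤ Real.exp (x ^ 2 / 4) := by
    refine le_trans ?_ (Real.sum_le_exp_of_nonneg h0 (m + 1))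
    refine Finset.single_le_sum (f := fun i => (x^2/4)^i / (i ! : ℝ)) (fun i _ => by positivity) ?_
    simp
  have h2 : (x ^ 2 / 4) ^ m = (x ^ 2) ^ m / 4 ^ m := by rw [div_pow]
  rw [h2] at h1
  have h3 : (0:ℝ) < (m ! : ℝ) := by positivity
  have h4 : (0:ℝ) < (4:ℝ) ^ m := by positivity
  calc (x ^ 2) ^ m = ((x ^ 2) ^ m / 4 ^ m / (m ! : ℝ)) * ((m ! : ℝ) * 4 ^ m) := by
        rw [div_div, mul_comm ((4:ℝ) ^ m) (m ! : ℝ)] at *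
        rw [div_mul_cancel₀ _ (by positivity)]
  _ ≤ Real.exp (x ^ 2 / 4) * ((m ! : ℝ) * 4 ^ m) := by
      apply mul_le_mul_of_nonneg_right h1 (by positivity)
  _ = (m ! : ℝ) * 4 ^ m * Real.exp (x ^ 2 / 4) := by ring

lemma integrable_pow_exp (m : ℕ) :
    Integrable (fun x : ℝ => x ^ m * Real.exp (-(x ^ 2 / 2))) := by
  have hg : Integrable (fun x : ℝ =>
      Real.exp (-(x ^ 2 / 2)) + (m ! : ℝ) * 4 ^ m * Real.exp (-(x ^ 2 / 4))) := by
    have h1 : Integrable (fun x : ℝ => Real.exp (-(2⁻¹ : ℝ) * x ^ 2)) :=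
      integrable_exp_neg_mul_sq (by norm_num)
    have h2 : Integrable (fun x : ℝ => Real.exp (-(4⁻¹ : ℝ) * x ^ 2)) :=
      integrable_exp_neg_mul_sq (by norm_num)
    have e1 : (fun x : ℝ => Real.exp (-(2⁻¹:ℝ) * x ^ 2)) = fun x : ℝ => Real.exp (-(x ^ 2 / 2)) := by
      funext x; ring_nf
    have e2 : (fun x : ℝ => Real.exp (-(4⁻¹:ℝ) * x ^ 2)) = fun x : ℝ => Real.exp (-(x ^ 2 / 4)) := by
      funext x; ring_nf
    rw [e1] at h1; rw [e2] at h2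
    exact h1.add (h2.const_mul _)
  refine hg.mono' ?_ ?_
  · apply Continuous.aestronglyMeasurable; continuity
  · filter_upwards with x
    rw [norm_mul, norm_pow, Real.norm_eq_abs, Real.norm_eq_abs,
      Real.abs_exp]
    have hb : |x| ^ m ≤ 1 + (x ^ 2) ^ m := pow_le_one_add_sq_pow m x
    have h2 : (x ^ 2) ^ m * Real.exp (-(x ^ 2 / 2)) ≤ (m ! : ℝ) * 4 ^ m * Real.exp (-(x ^ 2 / 4)) := by
      have := sq_pow_le m x
      have hrw : Real.exp (x ^ 2 / 4) * Real.exp (-(x ^ 2 / 2)) = Real.exp (-(x ^ 2 / 4)) := by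
        rw [← Real.exp_add]; ring_nf
      calc (x ^ 2) ^ m * Real.exp (-(x ^ 2 / 2))
          ≤ ((m ! : ℝ) * 4 ^ m * Real.exp (x ^ 2 / 4)) * Real.exp (-(x ^ 2 / 2)) :=
            mul_le_mul_of_nonneg_right this (Real.exp_nonneg _)
        _ = (m ! : ℝ) * 4 ^ m * (Real.exp (x ^ 2 / 4) * Real.exp (-(x ^ 2 / 2))) := by ring
        _ = (m ! : ℝ) * 4 ^ m * Real.exp (-(x ^ 2 / 4)) := by rw [hrw]
    nlinarith [Real.exp_nonneg (-(x ^ 2 / 2)), pow_nonneg (sq_nonneg x) m,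
      mul_le_mul_of_nonneg_right hb (Real.exp_nonneg (-(x ^ 2 / 2)))]

lemma hasDerivAt_exp_neg_sq (x : ℝ) :
    HasDerivAt (fun y : ℝ => Real.exp (-(y ^ 2 / 2))) (-x * Real.exp (-(x ^ 2 / 2))) x := by
  have h1 : HasDerivAt (fun y : ℝ => -(y ^ 2 / 2)) (-x) x := by
    have := (hasDerivAt_pow 2 x).div_const 2
    have h2 := this.neg
    exact h2.congr_deriv (by norm_num)
  have := h1.exp
  convert this using 1
  ring

lemma int_rec (m : ℕ) :
    ∫ x : ℝ, x ^ (m + 2) * Real.exp (-(x ^ 2 / 2)) =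
      (m + 1 : ℝ) * ∫ x : ℝ, x ^ m * Real.exp (-(x ^ 2 / 2)) := by
  have hderiv : ∀ x : ℝ, HasDerivAt (fun y : ℝ => y ^ (m + 1) * Real.exp (-(y ^ 2 / 2)))
      ((m + 1 : ℝ) * x ^ m * Real.exp (-(x ^ 2 / 2)) - x ^ (m + 2) * Real.exp (-(x ^ 2 / 2))) x := by
    intro x
    have h := (hasDerivAt_pow (m + 1) x).mul (hasDerivAt_exp_neg_sq x)
    exact h.congr_deriv (by push_cast; ring)
  have hint1 : Integrable (fun x : ℝ => ((m : ℝ) + 1) * (x ^ m * Real.exp (-(x ^ 2 / 2)))) :=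
    (integrable_pow_exp m).const_mul _
  have hderiv' : ∀ x : ℝ, HasDerivAt (fun y : ℝ => y ^ (m + 1) * Real.exp (-(y ^ 2 / 2)))
      (((m : ℝ) + 1) * (x ^ m * Real.exp (-(x ^ 2 / 2))) - x ^ (m + 2) * Real.exp (-(x ^ 2 / 2))) x := by
    intro x
    convert hderiv x using 1
    ring
  have hsub : Integrable (fun x : ℝ => ((m : ℝ) + 1) * (x ^ m * Real.exp (-(x ^ 2 / 2)))
      - x ^ (m + 2) * Real.exp (-(x ^ 2 / 2))) := by
    simpa [Pi.sub_def] using hint1.sub (integrable_pow_exp (m + 2))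
  have h0 := integral_eq_zero_of_hasDerivAt_of_integrable hderiv' hsub (integrable_pow_exp (m + 1))
  rw [integral_sub hint1 (integrable_pow_exp (m + 2)), sub_eq_zero] at h0
  rw [← h0, integral_const_mul]

lemma int_zero : ∫ x : ℝ, x ^ 0 * Real.exp (-(x ^ 2 / 2)) = Real.sqrt (2 * Real.pi) := by
  simp_rw [pow_zero, one_mul]
  have h := integral_gaussian (1/2 : ℝ)
  have e1 : (fun x : ℝ => Real.exp (-(1/2:ℝ) * x ^ 2)) = fun x : ℝ => Real.exp (-(x ^ 2 / 2)) := by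
    funext x; ring_nf
  rw [e1] at h
  rw [h, show (Real.pi / (1/2 : ℝ)) = 2 * Real.pi by ring]

lemma int_one : ∫ x : ℝ, x ^ 1 * Real.exp (-(x ^ 2 / 2)) = 0 := by
  have hderiv : ∀ x : ℝ, HasDerivAt (fun y : ℝ => -Real.exp (-(y ^ 2 / 2)))
      (x ^ 1 * Real.exp (-(x ^ 2 / 2))) x := by
    intro x
    have := (hasDerivAt_exp_neg_sq x).neg
    exact this.congr_deriv (by ring)
  have hF : Integrable (fun y : ℝ => -Real.exp (-(y ^ 2 / 2))) := by
    have h00 : Integrable (fun y : ℝ => Real.exp (-(y ^ 2 / 2))) := by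
      simpa using integrable_pow_exp 0
    exact h00.neg
  exact integral_eq_zero_of_hasDerivAt_of_integrable hderiv (integrable_pow_exp 1) hF

lemma gaussianPDFReal_std (x : ℝ) :
    gaussianPDFReal 0 1 x = (Real.sqrt (2 * Real.pi))⁻¹ * Real.exp (-(x ^ 2 / 2)) := by
  rw [gaussianPDFReal_def]
  norm_num
  exact Or.inl (by ring)

lemma gauss_integral_eq (g : ℝ → ℝ) :
    ∫ x, g x ∂(gaussianReal 0 1) =
      (Real.sqrt (2 * Real.pi))⁻¹ * ∫ x : ℝ, g x * Real.exp (-(x ^ 2 / 2)) := by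
  rw [gaussianReal_of_var_ne_zero 0 one_ne_zero]
  have hmeas : Measurable (fun x => (gaussianPDFReal 0 1 x).toNNReal) :=
    (measurable_gaussianPDFReal 0 1).real_toNNReal
  have hdens : gaussianPDF 0 1 = fun x => ((gaussianPDFReal 0 1 x).toNNReal : ENNReal) := rfl
  rw [hdens, integral_withDensity_eq_integral_smul hmeas]
  rw [← integral_const_mul]
  congr 1
  funext x
  rw [NNReal.smul_def, smul_eq_mul, Real.coe_toNNReal _ (gaussianPDFReal_nonneg 0 1 x),
    gaussianPDFReal_std]
  ring

lemma gauss_integrable_pow (m : ℕ) :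
    Integrable (fun x : ℝ => x ^ m) (gaussianReal 0 1) := by
  rw [gaussianReal_of_var_ne_zero 0 one_ne_zero]
  rw [integrable_withDensity_iff (measurable_gaussianPDF 0 1)
    (Filter.Eventually.of_forall fun x => ENNReal.ofReal_lt_top)]
  have : (fun x : ℝ => x ^ m * (gaussianPDF 0 1 x).toReal)
      = fun x : ℝ => (Real.sqrt (2 * Real.pi))⁻¹ * (x ^ m * Real.exp (-(x ^ 2 / 2))) := by
    funext x
    rw [gaussianPDF_def]
    simp only [ENNReal.toReal_ofReal (gaussianPDFReal_nonneg 0 1 x)]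
    rw [gaussianPDFReal_std]
    ring
  rw [this]
  exact (integrable_pow_exp m).const_mul _

lemma sqrt_two_pi_pos : (0:ℝ) < Real.sqrt (2 * Real.pi) :=
  Real.sqrt_pos.2 (by positivity)

lemma gauss_moment_even (k : ℕ) :
    ∫ x, x ^ (2 * k) ∂(gaussianReal 0 1) = Mr k := by
  induction k with
  | zero =>
      rw [gauss_integral_eq, Nat.mul_zero, int_zero, Mr_zero,
        inv_mul_cancel₀ sqrt_two_pi_pos.ne']
  | succ k ih =>
      rw [gauss_integral_eq] at ih ⊢
      have h2 : 2 * (k + 1) = 2 * k + 2 := by ring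
      rw [h2, int_rec, Mr_succ]
      push_cast
      rw [← ih]
      ring

lemma gauss_moment_odd (k : ℕ) :
    ∫ x, x ^ (2 * k + 1) ∂(gaussianReal 0 1) = 0 := by
  induction k with
  | zero =>
      have h1 := int_one
      simp only [pow_one] at h1
      rw [gauss_integral_eq]
      simp only [Nat.mul_zero, Nat.zero_add, pow_one, h1, mul_zero]
  | succ k ih =>
      rw [gauss_integral_eq] at ih ⊢
      have h2 : 2 * (k + 1) + 1 = (2 * k + 1) + 2 := by ring
      rw [h2, int_rec]
      rcases mul_eq_zero.1 ih with h | h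
      · exact absurd h (by positivity)
      · rw [h]; ring

lemma gauss_moment (m : ℕ) :
    ∫ x, x ^ m ∂(gaussianReal 0 1) = if Even m then Mr (m / 2) else 0 := by
  rcases Nat.even_or_odd m with ⟨k, hk⟩ | ⟨k, hk⟩
  · have hm : m = 2 * k := by omega
    subst hm
    rw [if_pos (by exact ⟨k, by ring⟩), Nat.mul_div_cancel_left k (by norm_num)]
    exact gauss_moment_even k
  · subst hk
    rw [if_neg (by simp [Nat.even_add_one, parity_simps])]
    exact gauss_moment_odd k

universe u

lemma integrable_pi_prod : ∀ (n : ℕ) {E : Fin n → Type u} [inst : ∀ i, MeasurableSpace (E i)]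
    (μ : (i : Fin n) → Measure (E i)) [∀ i, IsProbabilityMeasure (μ i)]
    (f : (i : Fin n) → E i → ℝ), (∀ i, Integrable (f i) (μ i)) →
    Integrable (fun x => ∏ i, f i (x i)) (Measure.pi μ) := by
  intro n
  induction n with
  | zero =>
      intro E _ μ _ f _
      have : (fun x : (i : Fin 0) → E i => ∏ i, f i (x i)) = fun _ => 1 := by
        funext x; simp
      rw [this]
      exact integrable_const 1
  | succ n ih =>
      intro E _ μ _ f hf
      have mp := measurePreserving_piFinSuccAbove μ 0
      set e := MeasurableEquiv.piFinSuccAbove E 0 with he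
      have hcomp : (fun x : (i : Fin (n+1)) → E i => ∏ i, f i (x i)) =
          (fun z : E 0 × ((j : Fin n) → E ((0 : Fin (n+1)).succAbove j)) =>
            f 0 z.1 * ∏ j, f ((0 : Fin (n+1)).succAbove j) (z.2 j)) ∘ e := by
        funext x
        simp only [Function.comp_apply, he, MeasurableEquiv.piFinSuccAbove_apply,
          Fin.insertNthEquiv_symm_apply, Fin.removeNth, Fin.zero_succAbove]
        rw [Fin.prod_univ_succ]; rfl
      rw [hcomp]
      rw [mp.integrable_comp_emb e.measurableEmbedding]
      exact (hf 0).mul_prod (ih _ _ (fun j => hf _))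

lemma integrable_monomial1 {c m : ℕ} (w : Fin m → Fin c) :
    Integrable (fun y : Fin c → ℝ => ∏ t, y (w t))
      (Measure.pi fun _ : Fin c => gaussianReal 0 1) := by
  have hrw : (fun y : Fin c → ℝ => ∏ t, y (w t)) =
      fun y : Fin c → ℝ => ∏ j : Fin c,
        (y j) ^ (Finset.univ.filter (fun t => w t = j)).card := by
    funext y
    rw [← Finset.prod_fiberwise Finset.univ w (fun t => y (w t))]
    refine Finset.prod_congr rfl fun j _ => ?_
    rw [← Finset.prod_const]
    refine Finset.prod_congr rfl fun t ht => ?_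
    rw [(Finset.mem_filter.1 ht).2]
  rw [hrw]
  exact integrable_pi_prod c (fun _ => gaussianReal 0 1)
    (fun j y => y ^ (Finset.univ.filter (fun t => w t = j)).card)
    (fun j => gauss_integrable_pow _)

lemma tensorPow_expand {p : ℕ} {d : Fin p → ℕ} (T : ((i : Fin p) → Fin (d i)) → ℝ) (m : ℕ)
    (g : (i : Fin p) → Fin (d i) → ℝ) :
    tensorPair T g ^ m = ∑ V : Fin m → ((i : Fin p) → Fin (d i)),
      (∏ t, T (V t)) * ∏ i, ∏ t, g i (V t i) := by
  have h1 : tensorPair T g ^ m = ∏ _t : Fin m, tensorPair T g := by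
    rw [Finset.prod_const, Finset.card_univ, Fintype.card_fin]
  rw [h1]
  unfold tensorPair
  rw [Finset.prod_univ_sum]
  rw [Fintype.piFinset_univ]
  refine Finset.sum_congr rfl fun V _ => ?_
  rw [Finset.prod_mul_distrib]
  congr 1
  exact Finset.prod_comm

lemma integrable_tensorPow {p : ℕ} {d : Fin p → ℕ} (T : ((i : Fin p) → Fin (d i)) → ℝ) (m : ℕ) :
    Integrable (fun g : (i : Fin p) → Fin (d i) → ℝ => tensorPair T g ^ m)
      (Measure.pi fun i => Measure.pi fun _ : Fin (d i) => gaussianReal 0 1) := by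
  simp_rw [tensorPow_expand T m]
  apply integrable_finset_sum
  intro V _
  exact (integrable_pi_prod p _ _ (fun i => integrable_monomial1 (fun t => V t i))).const_mul _

lemma chooseId {j k : ℕ} (h : j ≤ k) :
    ((2 * k).choose (2 * j) : ℝ) * Mr j * Mr (k - j) = Mr k * (k.choose j : ℝ) := by
  unfold Mr
  rw [Nat.cast_choose ℝ (by omega : 2 * j ≤ 2 * k), Nat.cast_choose ℝ h]
  have h2 : 2 * k - 2 * j = 2 * (k - j) := by omega
  rw [h2]
  have e1 : ((2 * k)! : ℝ) ≠ 0 := Nat.cast_ne_zero.2 (Nat.factorial_ne_zero _)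
  have e2 : ((2 * j)! : ℝ) ≠ 0 := Nat.cast_ne_zero.2 (Nat.factorial_ne_zero _)
  have e3 : ((2 * (k - j))! : ℝ) ≠ 0 := Nat.cast_ne_zero.2 (Nat.factorial_ne_zero _)
  have e4 : ((k)! : ℝ) ≠ 0 := Nat.cast_ne_zero.2 (Nat.factorial_ne_zero _)
  have e5 : ((j)! : ℝ) ≠ 0 := Nat.cast_ne_zero.2 (Nat.factorial_ne_zero _)
  have e6 : ((k - j)! : ℝ) ≠ 0 := Nat.cast_ne_zero.2 (Nat.factorial_ne_zero _)
  have hp : (2:ℝ) ^ k = 2 ^ j * 2 ^ (k - j) := by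
    rw [← pow_add]; congr 1; omega
  rw [hp]
  field_simp

lemma keyIdentity (A t : ℝ) (m : ℕ) :
    ∑ i ∈ Finset.range (m + 1), A ^ i * (if Even i then Mr (i / 2) else 0) *
        (if Even (m - i) then Mr ((m - i) / 2) * t ^ ((m - i) / 2) else 0) * (m.choose i : ℝ)
      = if Even m then Mr (m / 2) * (A ^ 2 + t) ^ (m / 2) else 0 := by
  by_cases hm : Even m
  · obtain ⟨k, hk⟩ := hm
    subst hk
    have hkk : ∀ n : ℕ, n + n = 2 * n := fun n => by omega
    rw [if_pos ⟨k, rfl⟩]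
    have hdiv : (k + k) / 2 = k := by omega
    rw [hdiv, add_pow]
    rw [Finset.mul_sum]
    have hfil : ∑ i ∈ Finset.range (k + k + 1), A ^ i * (if Even i then Mr (i / 2) else 0) *
        (if Even (k + k - i) then Mr ((k + k - i) / 2) * t ^ ((k + k - i) / 2) else 0) *
          ((k + k).choose i : ℝ)
        = ∑ i ∈ (Finset.range (k + k + 1)).filter (fun i => Even i),
            A ^ i * (if Even i then Mr (i / 2) else 0) *
            (if Even (k + k - i) then Mr ((k + k - i) / 2) * t ^ ((k + k - i) / 2) else 0) *
              ((k + k).choose i : ℝ) := by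
      refine (Finset.sum_filter_of_ne fun i _ hne => ?_).symm
      by_contra hodd
      rw [if_neg hodd] at hne
      simp at hne
    rw [hfil]
    refine Finset.sum_nbij' (fun i => i / 2) (fun j => 2 * j) ?_ ?_ ?_ ?_ ?_
    · intro i hi
      simp only [Finset.mem_filter, Finset.mem_range] at hi
      simp only [Finset.mem_range]
      omega
    · intro j hj
      simp only [Finset.mem_range] at hj
      simp only [Finset.mem_filter, Finset.mem_range]
      exact ⟨by omega, ⟨j, by omega⟩⟩
    · intro i hi
      simp only [Finset.mem_filter, Finset.mem_range] at hi
      obtain ⟨_, ⟨r, hr⟩⟩ := hi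
      show 2 * (i / 2) = i
      omega
    · intro j _
      show (2 * j) / 2 = j
      omega
    · intro i hi
      simp only [Finset.mem_filter, Finset.mem_range] at hi
      obtain ⟨hilt, ⟨r, hr⟩⟩ := hi
      have hrk : r ≤ k := by omega
      beta_reduce
      have h1 : Even i := ⟨r, hr⟩
      have h2 : Even (k + k - i) := ⟨k - r, by omega⟩
      rw [if_pos h1, if_pos h2]
      have h3 : i / 2 = r := by omega
      have h4 : (k + k - i) / 2 = k - r := by omega
      rw [h3, h4]
      have h5 : (k + k).choose i = (2 * k).choose (2 * r) := by
        rw [show k + k = 2 * k by ring, show i = 2 * r by omega]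
      rw [h5]
      have h6 := chooseId hrk
      have h7 : A ^ i = (A ^ 2) ^ r := by rw [← pow_mul]; congr 1; omega
      rw [h7]
      calc (A ^ 2) ^ r * Mr r * (Mr (k - r) * t ^ (k - r)) * ((2 * k).choose (2 * r) : ℝ)
          = ((2 * k).choose (2 * r) : ℝ) * Mr r * Mr (k - r) * ((A ^ 2) ^ r * t ^ (k - r)) := by
            ring
        _ = Mr k * (k.choose r : ℝ) * ((A ^ 2) ^ r * t ^ (k - r)) := by rw [h6]
        _ = Mr k * ((A ^ 2) ^ r * t ^ (k - r) * (k.choose r : ℝ)) := by ring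
  · rw [if_neg hm]
    refine Finset.sum_eq_zero fun i hi => ?_
    simp only [Finset.mem_range] at hi
    by_cases h1 : Even i
    · have h2 : ¬Even (m - i) := by
        intro h
        apply hm
        have hmi : m = i + (m - i) := by omega
        rw [hmi]
        exact h1.add h
      rw [if_neg h2]
      ring
    · rw [if_neg h1]
      ring

lemma lin : ∀ (n : ℕ) (a : Fin n → ℝ) (m : ℕ),
    Integrable (fun w : Fin n → ℝ => (∑ j, a j * w j) ^ m)
      (Measure.pi fun _ : Fin n => gaussianReal 0 1) ∧
    ∫ w, (∑ j, a j * w j) ^ m ∂(Measure.pi fun _ : Fin n => gaussianReal 0 1) =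
      if Even m then Mr (m / 2) * (∑ j, (a j) ^ 2) ^ (m / 2) else 0 := by
  intro n
  induction n with
  | zero =>
      intro a m
      have hconst : (fun w : Fin 0 → ℝ => (∑ j, a j * w j) ^ m) = fun _ => (0:ℝ) ^ m := by
        funext w; simp
      constructor
      · rw [hconst]; exact integrable_const _
      · rw [hconst]
        rw [integral_const]
        simp only [measure_univ, ENNReal.toReal_one, probReal_univ, one_smul, Finset.univ_eq_empty,
          Finset.sum_empty]
        rcases Nat.eq_zero_or_pos m with hm | hm
        · subst hm
          simp [Mr_zero]
        · rw [zero_pow (by omega)]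
          by_cases he : Even m
          · rw [if_pos he, zero_pow (by rcases he with ⟨r, hr⟩; omega : m / 2 ≠ 0), mul_zero]
          · rw [if_neg he]
  | succ n ih =>
      intro a m
      have mp := measurePreserving_piFinSuccAbove (fun _ : Fin (n+1) => gaussianReal 0 1) 0
      set e := MeasurableEquiv.piFinSuccAbove (fun _ : Fin (n+1) => ℝ) 0 with he
      set ν := Measure.pi fun _ : Fin n => gaussianReal 0 1 with hν
      set S : (Fin n → ℝ) → ℝ := fun y => ∑ j, a j.succ * y j with hS
      set h : ℝ × (Fin n → ℝ) → ℝ := fun z =>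
        ∑ i ∈ Finset.range (m + 1), (a 0 * z.1) ^ i * S z.2 ^ (m - i) * (m.choose i : ℝ) with hh
      have hcomp : (fun w : Fin (n+1) → ℝ => (∑ j, a j * w j) ^ m) = h ∘ e := by
        funext w
        simp only [Function.comp_apply, he, MeasurableEquiv.piFinSuccAbove_apply,
          Fin.insertNthEquiv_symm_apply, Fin.removeNth, Fin.zero_succAbove, hh, hS]
        rw [Fin.sum_univ_succ, add_pow]
      have hint_term : ∀ i, Integrable (fun z : ℝ × (Fin n → ℝ) =>
          (a 0 * z.1) ^ i * S z.2 ^ (m - i) * (m.choose i : ℝ))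
          ((gaussianReal 0 1).prod ν) := by
        intro i
        apply Integrable.mul_const
        have h1 : Integrable (fun u : ℝ => (a 0 * u) ^ i) (gaussianReal 0 1) := by
          simp_rw [mul_pow]
          exact (gauss_integrable_pow i).const_mul _
        exact h1.mul_prod (ih (fun j => a j.succ) (m - i)).1
      have hint : Integrable h ((gaussianReal 0 1).prod ν) :=
        integrable_finset_sum _ (fun i _ => hint_term i)
      constructor
      · rw [hcomp, mp.integrable_comp_emb e.measurableEmbedding]
        exact hint
      · have hstep : ∫ w, (∑ j, a j * w j) ^ m
            ∂(Measure.pi fun _ : Fin (n+1) => gaussianReal 0 1)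
            = ∫ z, h z ∂((gaussianReal 0 1).prod ν) := by
          rw [show (∫ w, (∑ j, a j * w j) ^ m
            ∂(Measure.pi fun _ : Fin (n+1) => gaussianReal 0 1))
            = ∫ w, (h ∘ e) w ∂(Measure.pi fun _ : Fin (n+1) => gaussianReal 0 1) by
              rw [← hcomp]]
          exact mp.integral_comp' h
        rw [hstep, hh]
        simp only
        rw [integral_finset_sum _ (fun i _ => hint_term i)]
        have hterm : ∀ i ∈ Finset.range (m + 1),
            (∫ z : ℝ × (Fin n → ℝ), (a 0 * z.1) ^ i * S z.2 ^ (m - i) * (m.choose i : ℝ)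
              ∂((gaussianReal 0 1).prod ν))
            = (a 0) ^ i * (if Even i then Mr (i / 2) else 0) *
              (if Even (m - i) then Mr ((m - i) / 2) * (∑ j : Fin n, (a j.succ) ^ 2) ^ ((m - i) / 2) else 0)
                * (m.choose i : ℝ) := by
          intro i _
          rw [integral_mul_const]
          rw [integral_prod_mul (fun u : ℝ => (a 0 * u) ^ i) (fun y => S y ^ (m - i))]
          have h1 : ∫ u : ℝ, (a 0 * u) ^ i ∂(gaussianReal 0 1)
              = (a 0) ^ i * (if Even i then Mr (i / 2) else 0) := by
            simp_rw [mul_pow]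
            rw [integral_const_mul, gauss_moment]
          rw [h1, (ih (fun j => a j.succ) (m - i)).2]
        rw [Finset.sum_congr rfl hterm, keyIdentity]
        rw [Fin.sum_univ_succ]

lemma tensor_slice {p : ℕ} {d : Fin (p+1) → ℕ} (T : ((i : Fin (p+1)) → Fin (d i)) → ℝ)
    (g : (i : Fin (p+1)) → Fin (d i) → ℝ) :
    tensorPair T g = ∑ i0 : Fin (d 0), g 0 i0 *
      tensorPair (fun ft => T (Fin.cons i0 ft)) (fun j => g j.succ) := by
  unfold tensorPair
  rw [← Equiv.sum_comp (Fin.consEquiv (fun i => Fin (d i)))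
    (fun f => T f * ∏ i, g i (f i))]
  rw [Fintype.sum_prod_type]
  refine Finset.sum_congr rfl fun i0 _ => ?_
  rw [Finset.mul_sum]
  refine Finset.sum_congr rfl fun ft _ => ?_
  simp only [Fin.consEquiv, Equiv.coe_fn_mk]
  rw [Fin.prod_univ_succ]
  simp only [Fin.cons_zero, Fin.cons_succ]
  ring

lemma tensor_slice_sum {p : ℕ} {d : Fin (p+1) → ℕ} (T : ((i : Fin (p+1)) → Fin (d i)) → ℝ)
    (x0 : Fin (d 0) → ℝ) (y : (j : Fin p) → Fin (d j.succ) → ℝ) :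
    tensorPair (fun ft => ∑ i0 : Fin (d 0), T (Fin.cons i0 ft) * x0 i0) y
      = ∑ i0 : Fin (d 0), x0 i0 * tensorPair (fun ft => T (Fin.cons i0 ft)) y := by
  unfold tensorPair
  simp_rw [Finset.sum_mul]
  rw [Finset.sum_comm]
  refine Finset.sum_congr rfl fun i0 _ => ?_
  rw [Finset.mul_sum]
  refine Finset.sum_congr rfl fun ft _ => ?_
  ring

lemma main_ind : ∀ (p : ℕ) (d : Fin p → ℕ) (T : ((i : Fin p) → Fin (d i)) → ℝ)
    (x : (i : Fin p) → Fin (d i) → ℝ), (∀ i, ∑ j, x i j ^ 2 = 1) → ∀ k : ℕ,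
    Mr k ^ p * tensorPair T x ^ (2 * k) ≤
      ∫ g, tensorPair T g ^ (2 * k)
        ∂(Measure.pi fun i => Measure.pi fun _ : Fin (d i) => gaussianReal 0 1) := by
  intro p
  induction p with
  | zero =>
      intro d T x hx k
      have hconst : ∀ y : (i : Fin 0) → Fin (d i) → ℝ,
          tensorPair T y = T (fun i => i.elim0) := by
        intro y
        unfold tensorPair
        rw [Fintype.sum_subsingleton _ (fun i => i.elim0)]
        simp
      simp_rw [hconst]
      rw [integral_const]
      simp only [measure_univ, ENNReal.toReal_one, probReal_univ, one_smul, pow_zero, one_mul]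
      exact le_refl _
  | succ p ih =>
      intro d T x hx k
      set ν := Measure.pi fun j : Fin p =>
        Measure.pi fun _ : Fin (d j.succ) => gaussianReal 0 1 with hν
      set μ0 := Measure.pi fun _ : Fin (d 0) => gaussianReal 0 1 with hμ0
      have mp := measurePreserving_piFinSuccAbove
        (fun i : Fin (p+1) => Measure.pi fun _ : Fin (d i) => gaussianReal 0 1) 0
      set e := MeasurableEquiv.piFinSuccAbove (fun i : Fin (p+1) => (Fin (d i) → ℝ)) 0 with he
      have mp' : MeasurePreserving (⇑e)
          (Measure.pi fun i : Fin (p+1) => Measure.pi fun _ : Fin (d i) => gaussianReal 0 1)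
          (μ0.prod ν) := mp
      set c : Fin (d 0) → ((j : Fin p) → Fin (d j.succ) → ℝ) → ℝ :=
        fun i0 y => tensorPair (fun ft => T (Fin.cons i0 ft)) y with hc
      set H : (Fin (d 0) → ℝ) × ((j : Fin p) → Fin (d j.succ) → ℝ) → ℝ :=
        fun z => (∑ i0, z.1 i0 * c i0 z.2) ^ (2 * k) with hH
      have hcomp : (fun g : (i : Fin (p+1)) → Fin (d i) → ℝ => tensorPair T g ^ (2*k)) =
          H ∘ e := by
        funext g
        simp only [Function.comp_apply, he, MeasurableEquiv.piFinSuccAbove_apply,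
          Fin.insertNthEquiv_symm_apply, Fin.removeNth, hH]
        rw [tensor_slice T g]
        rfl
      have hHint : Integrable H (μ0.prod ν) := by
        refine (mp'.integrable_comp_emb e.measurableEmbedding).1 ?_
        have := integrable_tensorPow T (2*k)
        rw [hcomp] at this
        exact this
      have h1 : ∫ g, tensorPair T g ^ (2*k)
            ∂(Measure.pi fun i : Fin (p+1) => Measure.pi fun _ : Fin (d i) => gaussianReal 0 1)
          = ∫ y, ∫ x0, H (x0, y) ∂μ0 ∂ν := by
        rw [show (∫ g, tensorPair T g ^ (2*k)
            ∂(Measure.pi fun i : Fin (p+1) => Measure.pi fun _ : Fin (d i) => gaussianReal 0 1))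
            = ∫ g, (H ∘ e) g
            ∂(Measure.pi fun i : Fin (p+1) => Measure.pi fun _ : Fin (d i) => gaussianReal 0 1)
          from by rw [← hcomp]]
        exact (mp'.integral_comp' H).trans (integral_prod_symm H hHint)
      have h2 : ∀ y, ∫ x0, H (x0, y) ∂μ0 = Mr k * (∑ i0, (c i0 y) ^ 2) ^ k := by
        intro y
        have heq : (fun x0 : Fin (d 0) → ℝ => H (x0, y))
            = fun x0 : Fin (d 0) → ℝ => (∑ i0, (fun i0 => c i0 y) i0 * x0 i0) ^ (2*k) := by
          funext x0
          simp only [hH]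
          congr 1
          exact Finset.sum_congr rfl fun i0 _ => mul_comm _ _
        rw [heq, (lin (d 0) (fun i0 => c i0 y) (2*k)).2,
          if_pos ⟨k, two_mul k⟩, Nat.mul_div_cancel_left k (by norm_num : 0 < 2)]
      set Sc : ((j : Fin p) → Fin (d j.succ)) → ℝ :=
        fun ft => ∑ i0, T (Fin.cons i0 ft) * x 0 i0 with hSc
      have hSy : ∀ y, tensorPair Sc y = ∑ i0, x 0 i0 * c i0 y :=
        fun y => tensor_slice_sum T (x 0) y
      have hTx : tensorPair Sc (fun j => x j.succ) = tensorPair T x := by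
        rw [hSy, tensor_slice T x]
      have h3 : ∀ y, Mr k * tensorPair Sc y ^ (2*k) ≤ Mr k * (∑ i0, (c i0 y) ^ 2) ^ k := by
        intro y
        refine mul_le_mul_of_nonneg_left ?_ (Mr_nonneg k)
        rw [pow_mul, hSy y]
        refine pow_le_pow_left₀ (sq_nonneg _) ?_ k
        calc (∑ i0, x 0 i0 * c i0 y) ^ 2
            ≤ (∑ i0, (x 0 i0) ^ 2) * (∑ i0, (c i0 y) ^ 2) :=
              Finset.sum_mul_sq_le_sq_mul_sq _ _ _
          _ = ∑ i0, (c i0 y) ^ 2 := by rw [hx 0, one_mul]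
      have h4 : Integrable (fun y => ∫ x0, H (x0, y) ∂μ0) ν := hHint.integral_prod_right
      calc Mr k ^ (p+1) * tensorPair T x ^ (2*k)
          = Mr k * (Mr k ^ p * tensorPair Sc (fun j => x j.succ) ^ (2*k)) := by
            rw [hTx, pow_succ]; ring
        _ ≤ Mr k * ∫ y, tensorPair Sc y ^ (2*k) ∂ν :=
            mul_le_mul_of_nonneg_left
              (ih (fun j => d j.succ) Sc (fun j => x j.succ) (fun j => hx j.succ) k)
              (Mr_nonneg k)
        _ = ∫ y, Mr k * tensorPair Sc y ^ (2*k) ∂ν := (integral_const_mul _ _).symm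
        _ ≤ ∫ y, (∫ x0, H (x0, y) ∂μ0) ∂ν := by
            refine integral_mono_of_nonneg ?_ h4 ?_
            · filter_upwards with y
              exact mul_nonneg (Mr_nonneg k) (Even.pow_nonneg ⟨k, by ring⟩ _)
            · filter_upwards with y
              rw [h2 y]
              exact h3 y
        _ = ∫ g, tensorPair T g ^ (2*k)
            ∂(Measure.pi fun i : Fin (p+1) => Measure.pi fun _ : Fin (d i) => gaussianReal 0 1) :=
            h1.symm

/-- If `T` is a fixed real tensor, `x i` are unit vectors, and `g i ~ N(0, I_{d i})` are
independent standard Gaussian vectors, then for every positive integer `k`,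
`E[⟨T, g 1 ⊗ ... ⊗ g p⟩^(2k)] ≥ ((2k-1)!!)^p ⟨T, x 1 ⊗ ... ⊗ x p⟩^(2k)`,
with `(2k-1)!! = (2k)!/(2^k k!)`. -/
theorem stmt1 (p : ℕ) (hp : 0 < p) (d : Fin p → ℕ)
    (T : ((i : Fin p) → Fin (d i)) → ℝ)
    (x : (i : Fin p) → Fin (d i) → ℝ) (hx : ∀ i, ∑ j, x i j ^ 2 = 1)
    (k : ℕ) (hk : 0 < k) :
    (((2 * k)! : ℝ) / (2 ^ k * (k ! : ℝ))) ^ p * tensorPair T x ^ (2 * k) ≤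
      ∫ (g : (i : Fin p) → Fin (d i) → ℝ), tensorPair T g ^ (2 * k)
        ∂(Measure.pi fun i => Measure.pi fun _ : Fin (d i) => gaussianReal 0 1) := by
  have h := main_ind p d T x hx k
  rw [show (((2 * k)! : ℝ) / (2 ^ k * (k ! : ℝ))) = Mr k from rfl]
  exact h
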